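/- arXiv:1804.08008 — 4 statements merged into one kernel-verified Lean document; each statement's English description precedes it below -/
import Mathlib

section
/- For points p₁, q₁, p₂, q₂ in ℝ^d, define paths P_i(t) = ((p_i+q_i)/2 + cos(πt)·(p_i−q_i)/2, sin(πt)·(p_i−q_i)/2) in ℝ^{2d} for i = 1,2. Then the squared distance ‖P₁(t) − P₂(t)‖² equals a·cos(πt) + b for constants a, b depending only on p₁, p₂, q₁, q₂; in particular t ↦ ‖P₁(t) − P₂(t)‖ is monotone on [0,1]. -/
open Real

noncomputable def bcPath {d : ℕ} (p q : EuclideanSpace ℝ (Fin d)) (t : ℝ) :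
    EuclideanSpace ℝ (Fin d ⊕ Fin d) :=
  WithLp.toLp 2 (Sum.elim ((1/2 : ℝ) • (p + q) + (Real.cos (Real.pi * t) / 2) • (p - q))
           ((Real.sin (Real.pi * t) / 2) • (p - q)))

theorem bcPath_sq_dist_affine_in_cos {d : ℕ} (p₁ q₁ p₂ q₂ : EuclideanSpace ℝ (Fin d)) :
    ∃ a b : ℝ,
      (∀ t : ℝ, ‖bcPath p₁ q₁ t - bcPath p₂ q₂ t‖ ^ 2 = a * Real.cos (Real.pi * t) + b) ∧
      (MonotoneOn (fun t => ‖bcPath p₁ q₁ t - bcPath p₂ q₂ t‖) (Set.Icc (0:ℝ) 1) ∨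
       AntitoneOn (fun t => ‖bcPath p₁ q₁ t - bcPath p₂ q₂ t‖) (Set.Icc (0:ℝ) 1)) := by
  set a : ℝ := ∑ j : Fin d,
      2 * ((p₁ j + q₁ j - p₂ j - q₂ j)/2) * ((p₁ j - q₁ j - p₂ j + q₂ j)/2) with ha
  set b : ℝ := ∑ j : Fin d,
      (((p₁ j + q₁ j - p₂ j - q₂ j)/2)^2 + ((p₁ j - q₁ j - p₂ j + q₂ j)/2)^2) with hb
  have key : ∀ t : ℝ, ‖bcPath p₁ q₁ t - bcPath p₂ q₂ t‖ ^ 2 = a * Real.cos (Real.pi * t) + b := by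
    intro t
    have hs : Real.sin (Real.pi * t) ^ 2 + Real.cos (Real.pi * t) ^ 2 = 1 :=
      Real.sin_sq_add_cos_sq _
    rw [EuclideanSpace.norm_eq, Real.sq_sqrt (by positivity)]
    rw [Fintype.sum_sum_type, ha, hb]
    simp only [bcPath, PiLp.toLp_apply, PiLp.sub_apply, PiLp.add_apply, PiLp.smul_apply, Sum.elim_inl, Sum.elim_inr,
      Pi.add_apply, Pi.sub_apply, Pi.smul_apply, smul_eq_mul, Real.norm_eq_abs, sq_abs]
    rw [Finset.sum_mul, ← Finset.sum_add_distrib, ← Finset.sum_add_distrib]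
    apply Finset.sum_congr rfl
    intro j _
    nlinarith [hs]
  refine ⟨a, b, key, ?_⟩
  have cosmono : ∀ t₁ ∈ Set.Icc (0:ℝ) 1, ∀ t₂ ∈ Set.Icc (0:ℝ) 1, t₁ ≤ t₂ →
      Real.cos (Real.pi * t₂) ≤ Real.cos (Real.pi * t₁) := by
    intro t₁ ht₁ t₂ ht₂ h
    apply Real.cos_le_cos_of_nonneg_of_le_pi
    · exact mul_nonneg Real.pi_pos.le ht₁.1
    · nlinarith [ht₂.2, Real.pi_pos]
    · nlinarith [Real.pi_pos]
  rcases le_or_gt a 0 with hA | hA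
  · left
    intro t₁ ht₁ t₂ ht₂ h
    have h2 : ‖bcPath p₁ q₁ t₁ - bcPath p₂ q₂ t₁‖ ^ 2 ≤ ‖bcPath p₁ q₁ t₂ - bcPath p₂ q₂ t₂‖ ^ 2 := by
      rw [key, key]
      have := cosmono t₁ ht₁ t₂ ht₂ h
      nlinarith
    exact (pow_le_pow_iff_left₀ (norm_nonneg _) (norm_nonneg _) two_ne_zero).mp h2
  · right
    intro t₁ ht₁ t₂ ht₂ h
    have h2 : ‖bcPath p₁ q₁ t₂ - bcPath p₂ q₂ t₂‖ ^ 2 ≤ ‖bcPath p₁ q₁ t₁ - bcPath p₂ q₂ t₁‖ ^ 2 := by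
      rw [key, key]
      have := cosmono t₁ ht₁ t₂ ht₂ h
      nlinarith
    exact (pow_le_pow_iff_left₀ (norm_nonneg _) (norm_nonneg _) two_ne_zero).mp h2
end

section
/- For points p₁, q₁, p₂, q₂ in ℝ^d with ‖p₁−p₂‖ = ‖q₁−q₂‖, the Bezdek–Connelly paths P₁(t), P₂(t) in ℝ^{2d} satisfy ‖P₁(t) − P₂(t)‖ = ‖p₁ − p₂‖ for all t ∈ [0,1]. -/
open Real

local notation "⟪" x ", " y "⟫_ℝ" => @inner ℝ _ _ x y

lemma norm_sq_euclidean {ι : Type} [Fintype ι] (w : EuclideanSpace ℝ ι) :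
    ‖w‖ ^ 2 = ∑ i, ‖w i‖ ^ 2 := by
  rw [EuclideanSpace.norm_eq, Real.sq_sqrt (Finset.sum_nonneg fun i _ => sq_nonneg _)]

lemma norm_sq_sum_elim {d : ℕ} (u v : EuclideanSpace ℝ (Fin d))
    (x : EuclideanSpace ℝ (Fin d ⊕ Fin d)) (hx : ∀ i, x i = Sum.elim u v i) :
    ‖x‖ ^ 2 = ‖u‖ ^ 2 + ‖v‖ ^ 2 := by
  rw [norm_sq_euclidean x, norm_sq_euclidean u, norm_sq_euclidean v, Fintype.sum_sum_type]
  simp only [hx, Sum.elim_inl, Sum.elim_inr]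

theorem bcPath_dist_const {d : ℕ} (p₁ q₁ p₂ q₂ : EuclideanSpace ℝ (Fin d))
    (h : ‖p₁ - p₂‖ = ‖q₁ - q₂‖) :
    ∀ t ∈ Set.Icc (0:ℝ) 1, ‖bcPath p₁ q₁ t - bcPath p₂ q₂ t‖ = ‖p₁ - p₂‖ := by
  intro t _
  set a := p₁ - p₂ with ha
  set b := q₁ - q₂ with hb
  set c := Real.cos (Real.pi * t) with hc
  set s := Real.sin (Real.pi * t) with hs
  have hsum : ∀ i, (bcPath p₁ q₁ t - bcPath p₂ q₂ t) i =
      Sum.elim ((1/2 : ℝ) • (a + b) + (c / 2) • (a - b)) ((s / 2) • (a - b)) i := by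
    intro i
    rcases i with i | i <;>
      simp [bcPath, ha, hb, PiLp.sub_apply, PiLp.add_apply, PiLp.smul_apply, smul_eq_mul] <;>
      ring
  have key : ‖bcPath p₁ q₁ t - bcPath p₂ q₂ t‖ ^ 2 = ‖a‖ ^ 2 := by
    rw [norm_sq_sum_elim _ _ _ hsum]
    have e1 : ‖(1/2 : ℝ) • (a + b) + (c / 2) • (a - b)‖ ^ 2
        = ‖(1/2 : ℝ) • (a + b)‖ ^ 2 + 2 * ⟪(1/2 : ℝ) • (a + b), (c / 2) • (a - b)⟫_ℝ
          + ‖(c / 2) • (a - b)‖ ^ 2 := norm_add_sq_real _ _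
    have e2 : ⟪(1/2 : ℝ) • (a + b), (c / 2) • (a - b)⟫_ℝ
        = (1/2) * (c/2) * (‖a‖^2 - ‖b‖^2) := by
      rw [real_inner_smul_left, real_inner_smul_right]
      have : ⟪a + b, a - b⟫_ℝ = ‖a‖^2 - ‖b‖^2 := by
        rw [inner_sub_right, inner_add_left, inner_add_left,
          real_inner_self_eq_norm_sq, real_inner_self_eq_norm_sq, real_inner_comm b a]
        ring
      rw [this]; ring
    have e3 : ‖(1/2 : ℝ) • (a + b)‖ ^ 2 = (1/4) * ‖a + b‖^2 := by
      rw [norm_smul]; simp; ring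
    have e4 : ‖(c / 2) • (a - b)‖ ^ 2 = (c/2)^2 * ‖a - b‖^2 := by
      rw [norm_smul, Real.norm_eq_abs, mul_pow, sq_abs]
    have e5 : ‖(s / 2) • (a - b)‖ ^ 2 = (s/2)^2 * ‖a - b‖^2 := by
      rw [norm_smul, Real.norm_eq_abs, mul_pow, sq_abs]
    have par : ‖a + b‖^2 + ‖a - b‖^2 = 2 * (‖a‖^2 + ‖b‖^2) := by
      have := parallelogram_law_with_norm ℝ a b
      linarith
    have pyth : s^2 + c^2 = 1 := Real.sin_sq_add_cos_sq _
    have h2 : ‖a‖ ^ 2 = ‖b‖ ^ 2 := by rw [h]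
    rw [e1, e2, e3, e4, e5]
    linear_combination (1/4) * par + (c/2 - 1/2) * h2 + (‖a - b‖^2/4) * pyth
  have hnn : (0:ℝ) ≤ ‖a‖ := norm_nonneg a
  rw [← Real.sqrt_sq hnn, ← key, Real.sqrt_sq (norm_nonneg _)]
end

section
/- Let p₁, q₁, p₂, q₂ ∈ ℝ^d and let P₁, P₂ : [0,1] → ℝ^{2d} be the Bezdek–Connelly paths. If ‖p₁ − p₂‖ ≠ ‖q₁ − q₂‖, then t ↦ ‖P₁(t) − P₂(t)‖² is strictly monotone on [0,1]. -/
open Real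

lemma normsq_sum_elim {d : ℕ} (x y : EuclideanSpace ℝ (Fin d))
    (z : EuclideanSpace ℝ (Fin d ⊕ Fin d)) (hz : z = WithLp.toLp 2 (Sum.elim x y)) :
    ‖z‖ ^ 2 = ‖x‖ ^ 2 + ‖y‖ ^ 2 := by
  rw [← real_inner_self_eq_norm_sq z, ← real_inner_self_eq_norm_sq x,
    ← real_inner_self_eq_norm_sq y]
  simp only [PiLp.inner_apply, PiLp.toLp_apply, Fintype.sum_sum_type, hz, Sum.elim_inl,
    Sum.elim_inr]

lemma cos_strictAnti : StrictAntiOn (fun t : ℝ => Real.cos (Real.pi * t)) (Set.Icc (0:ℝ) 1) := by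
  intro x hx y hy hxy
  exact Real.strictAntiOn_cos ⟨mul_nonneg Real.pi_pos.le hx.1, by nlinarith [hx.2, Real.pi_pos]⟩
    ⟨mul_nonneg Real.pi_pos.le hy.1, by nlinarith [hy.2, Real.pi_pos]⟩
    (by nlinarith [Real.pi_pos])

lemma key_alg {d : ℕ} (s δ : EuclideanSpace ℝ (Fin d)) (c sn : ℝ) (h : sn ^ 2 + c ^ 2 = 1) :
    ‖(1/2 : ℝ) • s + (c/2) • δ‖ ^ 2 + ‖(sn/2) • δ‖ ^ 2
      = (‖s‖^2 + ‖δ‖^2)/4 + ((inner ℝ s δ : ℝ)/2) * c := by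
  rw [← real_inner_self_eq_norm_sq, ← real_inner_self_eq_norm_sq, ← real_inner_self_eq_norm_sq,
    ← real_inner_self_eq_norm_sq]
  simp only [inner_add_add_self, real_inner_smul_left, real_inner_smul_right,
    real_inner_comm s δ]
  linear_combination ((inner ℝ δ δ : ℝ)/4) * h

theorem bcPath_sq_dist_strict_monotone {d : ℕ}
    (p₁ q₁ p₂ q₂ : EuclideanSpace ℝ (Fin d))
    (h : ‖p₁ - p₂‖ ≠ ‖q₁ - q₂‖) :
    StrictMonoOn (fun t => ‖bcPath p₁ q₁ t - bcPath p₂ q₂ t‖ ^ 2) (Set.Icc (0:ℝ) 1) ∨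
    StrictAntiOn (fun t => ‖bcPath p₁ q₁ t - bcPath p₂ q₂ t‖ ^ 2) (Set.Icc (0:ℝ) 1) := by
  set s : EuclideanSpace ℝ (Fin d) := (p₁ + q₁) - (p₂ + q₂) with hs
  set δ : EuclideanSpace ℝ (Fin d) := (p₁ - q₁) - (p₂ - q₂) with hδ
  have hfun : ∀ t : ℝ, ‖bcPath p₁ q₁ t - bcPath p₂ q₂ t‖ ^ 2
      = (‖s‖^2 + ‖δ‖^2)/4 + ((inner ℝ s δ : ℝ)/2) * Real.cos (Real.pi * t) := by
    intro t
    have hdiff : bcPath p₁ q₁ t - bcPath p₂ q₂ t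
        = (WithLp.toLp 2 (Sum.elim ((1/2 : ℝ) • s + (Real.cos (Real.pi * t)/2) • δ)
            ((Real.sin (Real.pi * t)/2) • δ)) : EuclideanSpace ℝ (Fin d ⊕ Fin d)) := by
      ext i
      cases i <;>
        simp [bcPath, hs, hδ, smul_sub, smul_add, PiLp.sub_apply, PiLp.add_apply,
          PiLp.smul_apply, smul_eq_mul] <;> ring
    rw [normsq_sum_elim _ _ _ hdiff]
    exact key_alg s δ _ _ (Real.sin_sq_add_cos_sq _)
  have hinner : (inner ℝ s δ : ℝ) = ‖p₁ - p₂‖ ^ 2 - ‖q₁ - q₂‖ ^ 2 := by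
    have h1 : s = (p₁ - p₂) + (q₁ - q₂) := by rw [hs]; abel
    have h2 : δ = (p₁ - p₂) - (q₁ - q₂) := by rw [hδ]; abel
    rw [h1, h2, inner_sub_right, inner_add_left, inner_add_left,
      real_inner_comm (q₁ - q₂) (p₁ - p₂), real_inner_self_eq_norm_sq,
      real_inner_self_eq_norm_sq]
    ring
  have ha : (inner ℝ s δ : ℝ) ≠ 0 := by
    rw [hinner]
    intro hc
    exact h (by nlinarith [norm_nonneg (p₁ - p₂), norm_nonneg (q₁ - q₂), sq_abs (‖p₁-p₂‖ - ‖q₁-q₂‖)])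
  rcases lt_or_gt_of_ne ha with hneg | hpos
  · left
    intro x hx y hy hxy
    simp only [hfun]
    have := cos_strictAnti hx hy hxy
    nlinarith
  · right
    intro x hx y hy hxy
    simp only [hfun]
    have := cos_strictAnti hx hy hxy
    nlinarith
end

section
/- Let V be a finite set, E ⊆ V × V, and p, q : V → ℝ^d with ‖p u − p v‖ = ‖q u − q v‖ for all (u,v) ∈ E. Define the Bezdek–Connelly paths P_v(t) ∈ ℝ^{2d} for v ∈ V. Then for every (u,v) ∈ E and every t ∈ [0,1], ‖P_u(t) − P_v(t)‖ = ‖p u − p v‖; i.e., the continuous motion t ↦ (P_v(t))_{v∈V} preserves all edge lengths of the framework. -/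
open Real

lemma sumElim_sub {d : ℕ} (x y x' y' : EuclideanSpace ℝ (Fin d)) :
    (WithLp.toLp 2 (Sum.elim x y) : EuclideanSpace ℝ (Fin d ⊕ Fin d)) - WithLp.toLp 2 (Sum.elim x' y')
      = WithLp.toLp 2 (Sum.elim (x - x') (y - y')) := by
  ext i
  cases i <;> rfl

lemma norm_sumElim_sq {d : ℕ} (x y : EuclideanSpace ℝ (Fin d))
    (z : EuclideanSpace ℝ (Fin d ⊕ Fin d)) (hz : ∀ i, z (Sum.inl i) = x i ∧ z (Sum.inr i) = y i) :
    ‖z‖ ^ 2 = ‖x‖ ^ 2 + ‖y‖ ^ 2 := by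
  rw [← real_inner_self_eq_norm_sq, ← real_inner_self_eq_norm_sq,
    ← real_inner_self_eq_norm_sq]
  simp only [PiLp.inner_apply, RCLike.inner_apply, conj_trivial]
  rw [Fintype.sum_sum_type]
  congr 1 <;> refine Finset.sum_congr rfl fun i _ => ?_
  · rw [(hz i).1]
  · rw [(hz i).2]

theorem bcPath_preserves_edge_lengths {d : ℕ} {V : Type*} [Finite V]
    (E : Set (V × V)) (p q : V → EuclideanSpace ℝ (Fin d))
    (h : ∀ e ∈ E, ‖p e.1 - p e.2‖ = ‖q e.1 - q e.2‖) :
    ∀ e ∈ E, ∀ t ∈ Set.Icc (0:ℝ) 1,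
      ‖bcPath (p e.1) (q e.1) t - bcPath (p e.2) (q e.2) t‖ = ‖p e.1 - p e.2‖ := by
  intro e he t ht
  set A := p e.1 - p e.2 with hA
  set B := q e.1 - q e.2 with hB
  have hAB : ‖A‖ = ‖B‖ := h e he
  set c := Real.cos (Real.pi * t) with hc
  set s := Real.sin (Real.pi * t) with hs
  have hz : ∀ i, (bcPath (p e.1) (q e.1) t - bcPath (p e.2) (q e.2) t) (Sum.inl i)
        = ((1/2 : ℝ) • (A + B) + (c / 2) • (A - B)) i ∧
      (bcPath (p e.1) (q e.1) t - bcPath (p e.2) (q e.2) t) (Sum.inr i)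
        = ((s / 2) • (A - B)) i := by
    intro i
    constructor <;>
    · simp only [bcPath, PiLp.sub_apply, PiLp.toLp_apply, Sum.elim_inl, Sum.elim_inr, hA, hB, PiLp.add_apply,
        PiLp.smul_apply, smul_eq_mul, Pi.add_apply, Pi.sub_apply, Pi.smul_apply, ← hc, ← hs]
      ring
  have hcs : c ^ 2 + s ^ 2 = 1 := by
    rw [hc, hs, add_comm]; exact Real.sin_sq_add_cos_sq _
  clear hc hs hA hB
  clear_value A B c s
  have hsq : ‖bcPath (p e.1) (q e.1) t - bcPath (p e.2) (q e.2) t‖ ^ 2 = ‖A‖ ^ 2 := by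
    rw [norm_sumElim_sq _ _ _ hz]
    have hinner : (inner ℝ ((1/2 : ℝ) • (A + B)) ((c / 2) • (A - B)) : ℝ) = 0 := by
      rw [real_inner_smul_left, real_inner_smul_right, inner_sub_right, inner_add_left,
        inner_add_left, real_inner_self_eq_norm_sq A, real_inner_self_eq_norm_sq B,
        real_inner_comm B A, hAB]
      ring
    rw [norm_add_sq_real, hinner, norm_smul, norm_smul, norm_smul]
    have hpar : ‖A + B‖ ^ 2 + ‖A - B‖ ^ 2 = 2 * (‖A‖ ^ 2 + ‖B‖ ^ 2) := by
      rw [norm_add_sq_real, norm_sub_sq_real]; ring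
    have hAB2 : ‖A‖ ^ 2 = ‖B‖ ^ 2 := by rw [hAB]
    simp only [Real.norm_eq_abs, mul_pow, sq_abs]
    linear_combination (1/4) * hpar + (‖A - B‖ ^ 2 / 4) * hcs - (1/2) * hAB2
  rw [← Real.sqrt_sq (norm_nonneg (bcPath (p e.1) (q e.1) t - bcPath (p e.2) (q e.2) t)),
    hsq, Real.sqrt_sq (norm_nonneg A)]
end
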